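/- For n ≥ 1, Σ_{F∈F(n)} Π_{v∈V(F)} (2 − 1/h_v) = (2n+1)^{n−1}/n!. -/

import Mathlib

open Polynomial

inductive PlaneTree : Type where
  | node : List PlaneTree → PlaneTree

namespace PlaneTree

/-- total number of vertices -/
def numVertices : PlaneTree → ℕ
  | node ts => 1 + (ts.attach.map (fun t => numVertices t.1)).sum
decreasing_by simp only [PlaneTree.node.sizeOf_spec]; exact Nat.lt_add_left 1 (List.sizeOf_lt_of_mem t.2)

/-- number of internal vertices (vertices with at least one child) -/
def numInternal : PlaneTree → ℕ
  | node ts => (if ts.isEmpty then 0 else 1) + (ts.attach.map (fun t => numInternal t.1)).sum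
decreasing_by simp only [PlaneTree.node.sizeOf_spec]; exact Nat.lt_add_left 1 (List.sizeOf_lt_of_mem t.2)

/-- product of `g h_v` over all internal vertices `v`, where `h_v` is the number of
internal vertices of the subtree rooted at `v` -/
def internalHookProd {α : Type} [CommMonoid α] (g : ℕ → α) : PlaneTree → α
  | node ts =>
    (if ts.isEmpty then 1 else g (numInternal (node ts))) *
      (ts.attach.map (fun t => internalHookProd g t.1)).prod
decreasing_by simp only [PlaneTree.node.sizeOf_spec]; exact Nat.lt_add_left 1 (List.sizeOf_lt_of_mem t.2)

/-- product of `g h_v` over all vertices `v`, where `h_v` is the number of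
vertices of the subtree rooted at `v` -/
def vertexHookProd {α : Type} [CommMonoid α] (g : ℕ → α) : PlaneTree → α
  | node ts =>
    g (numVertices (node ts)) * (ts.attach.map (fun t => vertexHookProd g t.1)).prod
decreasing_by simp only [PlaneTree.node.sizeOf_spec]; exact Nat.lt_add_left 1 (List.sizeOf_lt_of_mem t.2)

/-- every internal vertex has exactly `a` children -/
def IsFullAry (a : ℕ) : PlaneTree → Prop
  | node ts => (ts.length = 0 ∨ ts.length = a) ∧ ∀ t ∈ ts, IsFullAry a t

/-- `IsKMAry k m b T`: with the root of `T` viewed as being on a level of parity `b`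
(`b = false` meaning even), every vertex on an even level has `k` children and
every vertex on an odd level has `m` or `0` children. -/
def IsKMAry (k m : ℕ) : Bool → PlaneTree → Prop
  | b, node ts =>
    (if b then ts.length = m ∨ ts.length = 0 else ts.length = k) ∧
      ∀ t ∈ ts, IsKMAry k m (!b) t

/-- number of vertices on levels of parity `b`, the root having parity `cur` -/
def parityVertices (b cur : Bool) : PlaneTree → ℕ
  | node ts =>
    (if cur = b then 1 else 0) + (ts.attach.map (fun t => parityVertices b (!cur) t.1)).sum
termination_by T => sizeOf T
decreasing_by simp only [PlaneTree.node.sizeOf_spec]; exact Nat.lt_add_left 1 (List.sizeOf_lt_of_mem t.2)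

/-- number of internal vertices on levels of parity `b`, the root having parity `cur` -/
def parityInternal (b cur : Bool) : PlaneTree → ℕ
  | node ts =>
    (if cur = b ∧ ¬ts.isEmpty then 1 else 0) +
      (ts.attach.map (fun t => parityInternal b (!cur) t.1)).sum
termination_by T => sizeOf T
decreasing_by simp only [PlaneTree.node.sizeOf_spec]; exact Nat.lt_add_left 1 (List.sizeOf_lt_of_mem t.2)

/-- the order of a `(k,m)`-ary tree: the number of internal (crucial) vertices on odd levels -/
def kmOrder (T : PlaneTree) : ℕ := parityInternal true false T

end PlaneTree

namespace PlaneTree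

theorem numVertices_node (ts : List PlaneTree) :
    numVertices (node ts) = 1 + (ts.map numVertices).sum := by
  rw [numVertices, List.attach_map_val]

theorem vertexHookProd_node {α : Type} [CommMonoid α] (g : ℕ → α) (ts : List PlaneTree) :
    vertexHookProd g (node ts) = g (numVertices (node ts)) * (ts.map (vertexHookProd g)).prod := by
  rw [vertexHookProd, List.attach_map_val]

theorem one_le_numVertices (T : PlaneTree) : 1 ≤ T.numVertices := by
  cases T with | node ts => rw [numVertices_node]; omega


end PlaneTree

open PlaneTree

attribute [local instance] Classical.propDecidable

noncomputable def forests : ℕ → Finset (List PlaneTree)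
  | 0 => {([] : List PlaneTree)}
  | n+1 => (Finset.range (n+1)).attach.biUnion fun k =>
      ((forests k.1) ×ˢ (forests (n - k.1))).image fun p => PlaneTree.node p.1 :: p.2
decreasing_by
  · have := Finset.mem_range.1 k.2; omega
  · omega

theorem mem_forests : ∀ (n : ℕ) (F : List PlaneTree),
    F ∈ forests n ↔ (F.map numVertices).sum = n := by
  intro n
  induction n using Nat.strong_induction_on with
  | _ n ih =>
    intro F
    match n with
    | 0 =>
      simp only [forests, Finset.mem_singleton]
      constructor
      · rintro rfl; simp
      · intro h
        cases F with
        | nil => rfl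
        | cons T G =>
          exfalso
          have := one_le_numVertices T
          simp only [List.map_cons, List.sum_cons] at h
          omega
    | n+1 =>
      rw [forests]
      simp only [Finset.mem_biUnion, Finset.mem_attach, Finset.mem_image, Finset.mem_product,
        true_and]
      constructor
      · rintro ⟨⟨k, hk⟩, ⟨⟨F1, G⟩, ⟨h1, h2⟩, rfl⟩⟩
        have hk' := Finset.mem_range.1 hk
        have e1 := (ih k (by omega) F1).1 h1
        have e2 := (ih (n-k) (by omega) G).1 h2
        simp only [List.map_cons, List.sum_cons, numVertices_node, e1, e2]
        omega
      · intro h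
        cases F with
        | nil => simp at h
        | cons T G =>
          cases T with
          | node F1 =>
            have h' : (1 + (F1.map numVertices).sum) + (G.map numVertices).sum = n+1 := by
              rw [List.map_cons, List.sum_cons, numVertices_node] at h
              omega
            have hkle : (F1.map numVertices).sum < n+1 := by omega
            refine ⟨⟨(F1.map numVertices).sum, Finset.mem_range.2 hkle⟩,
              ⟨(F1, G), ⟨?_, ?_⟩, rfl⟩⟩
            · exact (ih _ hkle F1).2 rfl
            · exact (ih (n - (F1.map numVertices).sum) (by omega) G).2 (by omega)

noncomputable def S (n : ℕ) : ℚ :=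
  ∑ F ∈ forests n, (F.map (PlaneTree.vertexHookProd (fun h => 2 - 1 / (h : ℚ)))).prod

theorem S_zero : S 0 = 1 := by
  simp [S, forests]

theorem S_succ (n : ℕ) :
    S (n+1) = ∑ k ∈ Finset.range (n+1), (2 - 1/((k:ℚ)+1)) * S k * S (n-k) := by
  classical
  have hdisj : (↑(Finset.range (n+1)).attach : Set {x // x ∈ Finset.range (n+1)}).PairwiseDisjoint
      (fun k : {x // x ∈ Finset.range (n+1)} =>
        ((forests k.1) ×ˢ (forests (n - k.1))).image fun p => PlaneTree.node p.1 :: p.2) := by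
    intro k _ k' _ hne
    rw [Function.onFun, Finset.disjoint_left]
    rintro F hF hF'
    obtain ⟨⟨F1, G⟩, hm, hFeq⟩ := Finset.mem_image.1 hF
    obtain ⟨⟨F1', G'⟩, hm', hFeq'⟩ := Finset.mem_image.1 hF'
    rw [← hFeq'] at hFeq
    simp only [List.cons.injEq, PlaneTree.node.injEq] at hFeq
    obtain ⟨h1, -⟩ := hFeq
    rw [Finset.mem_product] at hm hm'
    have e1 := (mem_forests _ _).1 hm.1
    have e1' := (mem_forests _ _).1 hm'.1
    apply hne
    apply Subtype.ext
    rw [← e1, ← e1', h1]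
  have key : ∀ k : ℕ, k < n + 1 →
      (∑ F ∈ ((forests k) ×ˢ (forests (n - k))).image (fun p => PlaneTree.node p.1 :: p.2),
        (F.map (PlaneTree.vertexHookProd (fun h => 2 - 1 / (h : ℚ)))).prod)
      = (2 - 1/((k:ℚ)+1)) * S k * S (n-k) := by
    intro k hk
    set w := fun F : List PlaneTree =>
      (F.map (PlaneTree.vertexHookProd (fun h => 2 - 1 / (h : ℚ)))).prod with hw
    rw [Finset.sum_image (fun p _ q _ h => by
      simp only [List.cons.injEq, PlaneTree.node.injEq] at h
      exact Prod.ext h.1 h.2)]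
    calc (∑ p ∈ (forests k) ×ˢ (forests (n-k)), w (PlaneTree.node p.1 :: p.2))
        = ∑ p ∈ (forests k) ×ˢ (forests (n-k)),
            ((2 - 1/((k:ℚ)+1)) * w p.1) * w p.2 := by
          refine Finset.sum_congr rfl (fun p hp => ?_)
          rw [Finset.mem_product] at hp
          have e1 := (mem_forests _ _).1 hp.1
          rw [hw]
          simp only [List.map_cons, List.prod_cons]
          rw [vertexHookProd_node, numVertices_node, e1]
          have : ((1 + k : ℕ) : ℚ) = (k:ℚ) + 1 := by push_cast; ring
          rw [this]
      _ = ∑ x ∈ forests k, ∑ y ∈ forests (n-k), ((2 - 1/((k:ℚ)+1)) * w x) * w y :=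
          Finset.sum_product _ _ _
      _ = (∑ x ∈ forests k, (2 - 1/((k:ℚ)+1)) * w x) * (∑ y ∈ forests (n-k), w y) :=
          (Finset.sum_mul_sum _ _ _ _).symm
      _ = (2 - 1/((k:ℚ)+1)) * S k * S (n-k) := by
          rw [← Finset.mul_sum, ← S, ← S]
  rw [S, forests, Finset.sum_biUnion hdisj, Finset.sum_attach _
    (fun k => ∑ F ∈ ((forests k) ×ˢ (forests (n - k))).image
        (fun p => PlaneTree.node p.1 :: p.2),
      (F.map (PlaneTree.vertexHookProd (fun h => 2 - 1 / (h : ℚ)))).prod)]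
  exact Finset.sum_congr rfl fun k hk => key k (Finset.mem_range.1 hk)

/-! Arithmetic part -/

noncomputable def a (n : ℕ) : ℚ := ((2 * n + 1 : ℕ) : ℚ) ^ (n - 1) / n.factorial

def wgt (x : ℚ) (k : ℕ) : ℚ := if k = 0 then 1 else x * (x + k) ^ (k - 1)

theorem sumAlt : ∀ (m : ℕ) (p : ℚ[X]), p.degree < (m : ℕ) →
    ∑ k ∈ Finset.range (m+1), (-1 : ℚ)^k * (m.choose k) * p.eval (k : ℚ) = 0 := by
  intro m
  induction m with
  | zero =>
    intro p hp
    have hbot : p = 0 := Polynomial.degree_eq_bot.1 (Nat.WithBot.lt_zero_iff.1 (by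
      simpa using hp))
    simp [hbot]
  | succ m ih =>
    intro p hp
    set q : ℚ[X] := p.comp (X + C 1) - p with hq
    have hqdeg : q.degree < (m : ℕ) := by
      by_cases h0 : p.natDegree = 0
      · have hc : p = C (p.coeff 0) := Polynomial.eq_C_of_natDegree_eq_zero h0
        have : q = 0 := by rw [hq, hc]; simp
        rw [this, Polynomial.degree_zero]
        exact WithBot.bot_lt_coe m
      · have hp0 : p ≠ 0 := fun h => h0 (by simp [h])
        have hX1 : (X + C (1:ℚ)).natDegree = 1 := Polynomial.natDegree_X_add_C 1
        have hXlc : (X + C (1:ℚ)).leadingCoeff = 1 := (Polynomial.monic_X_add_C 1)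
        have hdc : (p.comp (X + C 1)).natDegree = p.natDegree := by
          rw [Polynomial.natDegree_comp, hX1, mul_one]
        have hlc : (p.comp (X + C 1)).leadingCoeff = p.leadingCoeff := by
          rw [Polynomial.leadingCoeff_comp (by rw [hX1]; exact one_ne_zero), hXlc, one_pow,
            mul_one]
        have hcne : p.comp (X + C 1) ≠ 0 := by
          intro h
          apply hp0
          rw [← Polynomial.leadingCoeff_eq_zero, ← hlc, h, Polynomial.leadingCoeff_zero]
        have hdeg : (p.comp (X + C 1)).degree = p.degree := by
          rw [Polynomial.degree_eq_natDegree hcne, Polynomial.degree_eq_natDegree hp0, hdc]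
        have hlt := Polynomial.degree_sub_lt hdeg hcne hlc
        rw [hdeg] at hlt
        have hple : p.natDegree ≤ m := by
          have := (Polynomial.natDegree_lt_iff_degree_lt hp0).2 hp
          omega
        calc q.degree < p.degree := hlt
          _ = (p.natDegree : WithBot ℕ) := Polynomial.degree_eq_natDegree hp0
          _ ≤ (m : ℕ) := by exact_mod_cast WithBot.coe_le_coe.2 hple
    have hqe : ∀ k : ℕ, q.eval (k : ℚ) = p.eval ((k+1 : ℕ) : ℚ) - p.eval (k : ℚ) := by
      intro k
      rw [hq]
      simp only [Polynomial.eval_sub, Polynomial.eval_comp, Polynomial.eval_add,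
        Polynomial.eval_X, Polynomial.eval_C]
      push_cast
      ring
    have ihq := ih q hqdeg
    set F : ℕ → ℚ := fun k => p.eval (k : ℚ) with hF
    set S1 : ℚ := ∑ k ∈ Finset.range (m+1), (-1:ℚ)^k * (m.choose k) * F (k+1) with hS1
    set S2 : ℚ := ∑ k ∈ Finset.range (m+1), (-1:ℚ)^k * (m.choose (k+1)) * F (k+1) with hS2
    set Sm : ℚ := ∑ k ∈ Finset.range (m+1), (-1:ℚ)^k * (m.choose k) * F k with hSm
    have h3 : S1 - Sm = 0 := by
      rw [hS1, hSm, ← Finset.sum_sub_distrib]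
      rw [← ihq]
      refine Finset.sum_congr rfl fun k _ => ?_
      rw [hqe k]
      ring
    have h2 : S2 = F 0 - Sm := by
      have hb : S2 = ∑ k ∈ Finset.range m, (-1:ℚ)^k * (m.choose (k+1)) * F (k+1) := by
        rw [hS2, Finset.sum_range_succ, Nat.choose_succ_self]
        simp
      have hs : Sm = (∑ k ∈ Finset.range m, (-1:ℚ)^(k+1) * (m.choose (k+1)) * F (k+1))
          + (-1:ℚ)^0 * (m.choose 0) * F 0 := by
        rw [hSm, Finset.sum_range_succ']
      rw [hb, hs]
      simp only [pow_zero, Nat.choose_zero_right, Nat.cast_one, one_mul]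
      have : ∑ k ∈ Finset.range m, (-1:ℚ)^(k+1) * (m.choose (k+1)) * F (k+1)
          = - ∑ k ∈ Finset.range m, (-1:ℚ)^k * (m.choose (k+1)) * F (k+1) := by
        rw [← Finset.sum_neg_distrib]
        exact Finset.sum_congr rfl fun k _ => by ring
      rw [this]
      ring
    have h1 : ∑ k ∈ Finset.range (m+2), (-1 : ℚ)^k * ((m+1).choose k) * F k
        = -S1 - S2 + F 0 := by
      rw [Finset.sum_range_succ']
      have : ∀ k ∈ Finset.range (m+1), (-1:ℚ)^(k+1) * ((m+1).choose (k+1)) * F (k+1)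
          = -((-1:ℚ)^k * (m.choose k) * F (k+1)) - ((-1:ℚ)^k * (m.choose (k+1)) * F (k+1)) := by
        intro k _
        have : (((m+1).choose (k+1) : ℕ) : ℚ) = (m.choose k : ℚ) + (m.choose (k+1) : ℚ) := by
          rw [Nat.choose_succ_succ]
          push_cast
          ring
        rw [this]
        ring
      rw [Finset.sum_congr rfl this]
      rw [Finset.sum_sub_distrib]
      have hneg : ∑ x ∈ Finset.range (m+1), -((-1:ℚ)^x * (m.choose x) * F (x+1)) = -S1 := by
        rw [hS1, ← Finset.sum_neg_distrib]
      rw [hneg, ← hS2]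
      simp
    have : (∑ k ∈ Finset.range (m+1+1), (-1 : ℚ)^k * ((m+1).choose k) * p.eval (k:ℚ))
        = ∑ k ∈ Finset.range (m+2), (-1 : ℚ)^k * ((m+1).choose k) * F k := rfl
    rw [this, h1, h2]
    linarith [h3]

theorem abelP (x : ℚ) : ∀ n : ℕ, ∀ c : ℚ,
    ∑ k ∈ Finset.range (n+1),
      C ((n.choose k : ℚ) * wgt x k) * (X + C (c + ((n - k : ℕ) : ℚ))) ^ (n - k)
      = (X + C (x + c + n)) ^ n := by
  intro n
  induction n with
  | zero => intro c; simp [wgt]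
  | succ n ih =>
    intro c
    set L : ℚ[X] := ∑ k ∈ Finset.range (n+1+1),
      C (((n+1).choose k : ℚ) * wgt x k) * (X + C (c + ((n+1 - k : ℕ) : ℚ))) ^ (n+1 - k)
      with hLdef
    set R : ℚ[X] := (X + C (x + c + ((n+1 : ℕ) : ℚ))) ^ (n+1) with hRdef
    show L = R
    have hderL : derivative L = C (((n+1 : ℕ) : ℚ)) * (X + C (x + (c+1) + n)) ^ n := by
      rw [hLdef, Polynomial.derivative_sum, Finset.sum_range_succ]
      have htop : derivative (C (((n+1).choose (n+1) : ℚ) * wgt x (n+1)) *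
          (X + C (c + ((n+1 - (n+1) : ℕ) : ℚ))) ^ (n+1 - (n+1))) = 0 := by
        simp
      rw [htop, add_zero, ← ih (c+1), Finset.mul_sum]
      refine Finset.sum_congr rfl fun k hk => ?_
      have hk' : k ≤ n := Nat.lt_succ_iff.1 (Finset.mem_range.1 hk)
      rw [Polynomial.derivative_C_mul, Polynomial.derivative_pow]
      have hder1 : derivative (X + C (c + ((n+1 - k : ℕ) : ℚ))) = 1 := by simp
      rw [hder1, mul_one]
      have hbase : c + ((n+1 - k : ℕ) : ℚ) = (c+1) + ((n - k : ℕ) : ℚ) := by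
        have h1 : n+1-k = (n-k)+1 := by omega
        rw [h1]
        push_cast
        ring
      have hexp : n+1-k-1 = n-k := by omega
      have hcc : (((n+1).choose k : ℚ) * wgt x k) * ((n+1-k : ℕ) : ℚ)
          = ((n+1 : ℕ) : ℚ) * ((n.choose k : ℚ) * wgt x k) := by
        have h2 : ((n.choose k * (n+1) : ℕ) : ℚ) = (((n+1).choose k * (n+1-k) : ℕ) : ℚ) := by
          rw [Nat.choose_mul_succ_eq n k]
        push_cast at h2
        push_cast
        linear_combination (-(wgt x k)) * h2
      rw [hbase, hexp, ← mul_assoc, ← Polynomial.C_mul, ← mul_assoc, ← Polynomial.C_mul, hcc]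
    have hderR : derivative R = C (((n+1 : ℕ) : ℚ)) * (X + C (x + (c+1) + n)) ^ n := by
      rw [hRdef, Polynomial.derivative_pow]
      have : derivative (X + C (x + c + ((n+1 : ℕ) : ℚ))) = 1 := by simp
      rw [this, mul_one]
      have : x + c + ((n+1 : ℕ) : ℚ) = x + (c+1) + n := by push_cast; ring
      rw [this]
      norm_num
    have hD : derivative (L - R) = 0 := by
      rw [Polynomial.derivative_sub, hderL, hderR, sub_self]
    have hC := Polynomial.eq_C_of_derivative_eq_zero hD
    set y₀ : ℚ := -(x + c + ((n+1 : ℕ) : ℚ)) with hy₀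
    have hevalR : R.eval y₀ = 0 := by
      have hz : y₀ + (x + c + ((n+1 : ℕ) : ℚ)) = 0 := by rw [hy₀]; ring
      rw [hRdef, Polynomial.eval_pow, Polynomial.eval_add, Polynomial.eval_X,
        Polynomial.eval_C, hz]
      exact zero_pow (by omega)
    have hevalL : L.eval y₀ = 0 := by
      have hdeg : ((X + C x) ^ n : ℚ[X]).degree < ((n+1 : ℕ) : WithBot ℕ) := by
        have h1 : ((X + C x) ^ n : ℚ[X]).degree = (n : WithBot ℕ) := by
          rw [Polynomial.degree_pow, Polynomial.degree_X_add_C]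
          simp
        rw [h1]
        exact_mod_cast Nat.lt_succ_self n
      have hAlt := sumAlt (n+1) ((X + C x) ^ n) hdeg
      rw [hLdef, Polynomial.eval_finset_sum]
      have hterm : ∀ k ∈ Finset.range (n+1+1),
          (C (((n+1).choose k : ℚ) * wgt x k) *
            (X + C (c + ((n+1 - k : ℕ) : ℚ))) ^ (n+1 - k)).eval y₀
          = ((-1:ℚ)^(n+1) * x) *
            ((-1:ℚ)^k * (((n+1).choose k : ℚ)) * (((X + C x) ^ n : ℚ[X]).eval (k:ℚ))) := by
        intro k hk
        have hk' : k ≤ n+1 := Nat.lt_succ_iff.1 (Finset.mem_range.1 hk)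
        simp only [Polynomial.eval_mul, Polynomial.eval_pow, Polynomial.eval_add,
          Polynomial.eval_X, Polynomial.eval_C]
        have hbase : y₀ + (c + ((n+1 - k : ℕ) : ℚ)) = -(x + k) := by
          rw [hy₀, Nat.cast_sub hk']
          push_cast
          ring
        rw [hbase]
        have hneg : (-(x + (k:ℚ))) ^ (n+1-k) = (-1:ℚ)^(n+1-k) * (x + k) ^ (n+1-k) := by
          rw [neg_pow]
        have hsgn : ((-1:ℚ))^(n+1-k) = (-1:ℚ)^(n+1) * (-1:ℚ)^k := by
          rw [← pow_add]
          have h2 : n+1+k = (n+1-k) + 2*k := by omega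
          rw [h2, pow_add, pow_mul]
          norm_num
        have hw : wgt x k * (x + (k:ℚ)) ^ (n+1-k) = x * (x + k) ^ n := by
          by_cases hk0 : k = 0
          · subst hk0
            simp [wgt, pow_succ']
          · rw [wgt, if_neg hk0, mul_assoc, ← pow_add]
            congr 2
            omega
        rw [hneg, hsgn]
        linear_combination ((-1:ℚ)^(n+1) * (-1:ℚ)^k * (((n+1).choose k : ℚ))) * hw
      rw [Finset.sum_congr rfl hterm, ← Finset.mul_sum, hAlt, mul_zero]
    have heval := congrArg (Polynomial.eval y₀) hC
    rw [Polynomial.eval_sub, hevalL, hevalR, Polynomial.eval_C] at heval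
    have hcoeff : (L - R).coeff 0 = 0 := by linarith [heval]
    have hz : L - R = 0 := by rw [hC, hcoeff, map_zero]
    exact sub_eq_zero.1 hz

theorem abelEval (x y : ℚ) (n : ℕ) :
    ∑ k ∈ Finset.range (n+1),
      (n.choose k : ℚ) * wgt x k * (y + ((n - k : ℕ) : ℚ)) ^ (n - k)
      = (y + x + n) ^ n := by
  have h := congrArg (Polynomial.eval y) (abelP x n 0)
  rw [Polynomial.eval_finset_sum] at h
  simp only [Polynomial.eval_mul, Polynomial.eval_pow, Polynomial.eval_add,
    Polynomial.eval_X, Polynomial.eval_C, zero_add, add_zero] at h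
  rw [h]
  ring_nf

theorem qIdent (n : ℕ) (hn : 1 ≤ n) :
    ∑ k ∈ Finset.range (n+1),
      (n.choose k : ℚ) * wgt (-(1/2)) k *
        (if n - k = 0 then 1 else (1/2) * ((1/2 : ℚ) + ((n - k : ℕ) : ℚ)) ^ (n - k - 1)) = 0 := by
  obtain ⟨m, rfl⟩ : ∃ m, n = m+1 := ⟨n-1, by omega⟩
  set x : ℚ := -(1/2) with hx
  rw [Finset.sum_range_succ]
  have htopif : (m+1) - (m+1) = 0 := by omega
  rw [htopif, if_pos rfl]
  have hterm : ∀ k ∈ Finset.range (m+1),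
      ((m+1).choose k : ℚ) * wgt x k *
        (if (m+1) - k = 0 then 1 else (1/2) * ((1/2 : ℚ) + ((m+1 - k : ℕ) : ℚ)) ^ (m+1 - k - 1))
      = ((m+1).choose k : ℚ) * wgt x k * ((1/2:ℚ) + ((m+1-k : ℕ) : ℚ))^(m+1-k)
        - ((m+1 : ℕ) : ℚ) * ((m.choose k : ℚ) * wgt x k * ((3/2:ℚ) + ((m-k : ℕ) : ℚ))^(m-k)) := by
    intro k hk
    have hk' : k ≤ m := Nat.lt_succ_iff.1 (Finset.mem_range.1 hk)
    rw [if_neg (by omega)]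
    set B : ℚ := (1/2:ℚ) + ((m+1-k : ℕ) : ℚ) with hBdef
    have hb : B = (3/2:ℚ) + ((m-k : ℕ) : ℚ) := by
      rw [hBdef, show m+1-k = (m-k)+1 from by omega]
      push_cast
      ring
    have hexp : m+1-k-1 = m-k := by omega
    rw [hexp, ← hb]
    have hpow : B^(m+1-k) = B^(m-k) * B := by
      rw [← pow_succ, show (m-k)+1 = m+1-k from by omega]
    have hch : ((m+1).choose k : ℚ) * (B - 1/2) = ((m+1 : ℕ) : ℚ) * (m.choose k : ℚ) := by
      have h2 : ((m.choose k * (m+1) : ℕ) : ℚ) = (((m+1).choose k * (m+1-k) : ℕ) : ℚ) := by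
        rw [Nat.choose_mul_succ_eq m k]
      push_cast at h2
      have hBv : B - 1/2 = ((m+1-k : ℕ) : ℚ) := by rw [hBdef]; ring
      rw [hBv]
      push_cast
      linarith [h2]
    linear_combination (-(wgt x k) * ((m+1).choose k : ℚ)) * hpow
      + (-(wgt x k) * B^(m-k)) * hch
  rw [Finset.sum_congr rfl hterm, Finset.sum_sub_distrib]
  have hA := abelEval x (1/2) (m+1)
  rw [Finset.sum_range_succ] at hA
  have htop0 : ((1/2:ℚ) + ((m+1-(m+1) : ℕ) : ℚ))^(m+1-(m+1)) = 1 := by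
    rw [htopif]
    norm_num
  rw [htop0] at hA
  have hB := abelEval x (3/2) m
  have hfac : ∑ k ∈ Finset.range (m+1),
      ((m+1 : ℕ) : ℚ) * ((m.choose k : ℚ) * wgt x k * ((3/2:ℚ) + ((m-k : ℕ) : ℚ))^(m-k))
      = ((m+1 : ℕ) : ℚ) * ((3/2 + x + m) ^ m) := by
    rw [← Finset.mul_sum, hB]
  rw [hfac]
  have hAx : (1/2 + x + ((m+1 : ℕ) : ℚ)) = ((m+1 : ℕ) : ℚ) := by rw [hx]; ring
  rw [hAx] at hA
  have hBx : (3/2 + x + (m : ℚ)) = ((m+1 : ℕ) : ℚ) := by rw [hx]; push_cast; ring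
  rw [hBx]
  have hchtop : (((m+1).choose (m+1) : ℕ) : ℚ) = 1 := by
    rw [Nat.choose_self]
    norm_num
  rw [hchtop] at hA ⊢
  have : ((m+1 : ℕ) : ℚ) ^ (m+1) = ((m+1 : ℕ) : ℚ) * ((m+1 : ℕ) : ℚ) ^ m := by
    rw [pow_succ]
    ring
  linarith [hA]

theorem a_rec (n : ℕ) :
    a (n+1) = ∑ k ∈ Finset.range (n+1), (2 - 1/((k:ℚ)+1)) * a k * a (n-k) := by
  have key1 : ∀ j : ℕ, (if j = 0 then (1:ℚ) else (1/2) * ((1/2:ℚ) + ((j : ℕ) : ℚ))^(j-1))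
      = a j * (j.factorial : ℚ) / 2^j := by
    intro j
    by_cases hj : j = 0
    · subst hj; simp [a]
    · rw [if_neg hj, a]
      have hbase : (1/2:ℚ) + ((j : ℕ) : ℚ) = ((2*j+1 : ℕ) : ℚ)/2 := by push_cast; ring
      rw [hbase, div_pow]
      have h2 : (2:ℚ)^j = 2^(j-1) * 2 := by
        rw [← pow_succ, show j-1+1 = j from by omega]
      rw [h2]
      have hfacne : (j.factorial : ℚ) ≠ 0 := Nat.cast_ne_zero.2 (Nat.factorial_ne_zero j)
      have h2ne : (2:ℚ)^(j-1) ≠ 0 := pow_ne_zero _ (by norm_num)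
      field_simp
  have key3 : ∀ k : ℕ, (2 - 1/((k:ℚ)+1)) * a k = (2*(k:ℚ)+1)^k / (((k+1).factorial : ℕ) : ℚ) := by
    intro k
    rw [a]
    have hb : ((2*k+1 : ℕ) : ℚ) = 2*(k:ℚ)+1 := by push_cast; ring
    rw [hb]
    have hfac : (((k+1).factorial : ℕ) : ℚ) = ((k:ℚ)+1) * (k.factorial : ℚ) := by
      rw [Nat.factorial_succ]; push_cast; ring
    rw [hfac]
    have hpow : (2*(k:ℚ)+1)^(k-1) * (2*(k:ℚ)+1) = (2*(k:ℚ)+1)^k := by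
      cases k with
      | zero => norm_num
      | succ s => rw [← pow_succ, show s+1-1+1 = s+1 from by omega]
    have hfacne : (k.factorial : ℚ) ≠ 0 := Nat.cast_ne_zero.2 (Nat.factorial_ne_zero k)
    have hk1ne : ((k:ℚ)+1) ≠ 0 := by positivity
    field_simp
    linear_combination hpow
  have hq := qIdent (n+1) (by omega)
  rw [Finset.sum_range_succ'] at hq
  simp only [show ∀ k : ℕ, n+1-(k+1) = n-k from fun k => by omega, Nat.sub_zero] at hq
  set c : ℚ := ((n+1).factorial : ℚ) / 2^(n+1) with hc
  have hcne : c ≠ 0 := by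
    rw [hc]
    have h1 : ((n+1).factorial : ℚ) ≠ 0 := Nat.cast_ne_zero.2 (Nat.factorial_ne_zero _)
    positivity
  have hrw : ∀ k ∈ Finset.range (n+1),
      (((n+1).choose (k+1) : ℕ) : ℚ) * wgt (-(1/2)) (k+1) *
        (if n-k = 0 then (1:ℚ) else (1/2) * ((1/2:ℚ) + ((n-k : ℕ) : ℚ))^(n-k-1))
      = -((2 - 1/((k:ℚ)+1)) * a k * a (n-k) * c) := by
    intro k hk
    have hk' : k ≤ n := Nat.lt_succ_iff.1 (Finset.mem_range.1 hk)
    rw [key1 (n-k), key3 k, wgt, if_neg (by omega : ¬(k+1 = 0)), Nat.add_sub_cancel]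
    have hb : (-(1/2):ℚ) + ((k+1 : ℕ) : ℚ) = (2*(k:ℚ)+1)/2 := by push_cast; ring
    rw [hb, div_pow, hc]
    have hfac : (((n+1).factorial : ℕ) : ℚ)
        = ((n+1).choose (k+1) : ℚ) * (((k+1).factorial : ℕ) : ℚ) * (((n-k).factorial : ℕ) : ℚ) := by
      have h := Nat.choose_mul_factorial_mul_factorial (show k+1 ≤ n+1 by omega)
      rw [show n+1-(k+1) = n-k from by omega] at h
      exact_mod_cast h.symm
    rw [hfac]
    have hpow2 : (2:ℚ)^(n+1) = 2^k * 2 * 2^(n-k) := by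
      rw [show 2^k * 2 = (2:ℚ)^(k+1) from (pow_succ 2 k).symm, ← pow_add,
        show k+1+(n-k) = n+1 from by omega]
    rw [hpow2]
    have hfk1 : (((k+1).factorial : ℕ) : ℚ) ≠ 0 := Nat.cast_ne_zero.2 (Nat.factorial_ne_zero _)
    have h2k : (2:ℚ)^k ≠ 0 := pow_ne_zero _ (by norm_num)
    have h2nk : (2:ℚ)^(n-k) ≠ 0 := pow_ne_zero _ (by norm_num)
    field_simp
  rw [Finset.sum_congr rfl hrw, Finset.sum_neg_distrib] at hq
  have hf0 : (((n+1).choose 0 : ℕ) : ℚ) * wgt (-(1/2)) 0 *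
      (if n+1 = 0 then (1:ℚ) else (1/2) * ((1/2:ℚ) + ((n+1 : ℕ) : ℚ))^n) = a (n+1) * c := by
    have e := key1 (n+1)
    rw [Nat.add_sub_cancel] at e
    rw [e, hc]
    simp [wgt]
    ring
  rw [hf0] at hq
  have hsum : ∑ k ∈ Finset.range (n+1), (2 - 1/((k:ℚ)+1)) * a k * a (n-k) * c
      = (∑ k ∈ Finset.range (n+1), (2 - 1/((k:ℚ)+1)) * a k * a (n-k)) * c :=
    (Finset.sum_mul _ _ _).symm
  rw [hsum] at hq
  have : a (n+1) * c = (∑ k ∈ Finset.range (n+1), (2 - 1/((k:ℚ)+1)) * a k * a (n-k)) * c := by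
    linarith [hq]
  exact mul_right_cancel₀ hcne this

theorem S_eq_a : ∀ n, S n = a n := by
  intro n
  induction n using Nat.strong_induction_on with
  | _ n ih =>
    match n with
    | 0 => rw [S_zero]; simp [a]
    | n+1 =>
      rw [S_succ, a_rec]
      refine Finset.sum_congr rfl fun k hk => ?_
      have hk' := Finset.mem_range.1 hk
      rw [ih k (by omega), ih (n-k) (by omega)]

theorem bridge (n : ℕ) :
    (∑ᶠ F : {F : List PlaneTree // (F.map PlaneTree.numVertices).sum = n},
        (F.1.map (PlaneTree.vertexHookProd (fun h => 2 - 1 / (h : ℚ)))).prod) = S n := by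
  rw [finsum_subtype_eq_finsum_cond
    (f := fun F : List PlaneTree =>
      (F.map (PlaneTree.vertexHookProd (fun h => 2 - 1 / (h : ℚ)))).prod)
    (fun F : List PlaneTree => (F.map numVertices).sum = n)]
  have hset : (fun F : List PlaneTree => (F.map numVertices).sum = n)
      = fun F => F ∈ (forests n : Finset (List PlaneTree)) := by
    funext F
    exact (propext (mem_forests n F)).symm
  rw [S, ← finsum_mem_coe_finset]
  apply finsum_congr
  intro F
  exact finsum_congr_Prop (propext ((mem_forests n F).symm.trans Finset.mem_coe.symm))
    (fun _ => rfl)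

/-- `Σ_{F∈F(n)} Π_{v∈V(F)} (2 - 1/h_v) = (2n+1)ⁿ⁻¹/n!`, summed over plane forests with `n`
vertices. -/
theorem hook_two_sub_reciprocal_sum_forests (n : ℕ) (hn : 1 ≤ n) :
    (∑ᶠ F : {F : List PlaneTree // (F.map PlaneTree.numVertices).sum = n},
        (F.1.map (PlaneTree.vertexHookProd (fun h => 2 - 1 / (h : ℚ)))).prod)
      = ((2 * n + 1 : ℕ) : ℚ) ^ (n - 1) / n.factorial := by
  rw [bridge, S_eq_a]; rfl
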